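/- Let S be a set and let 𝐒 = (S_i)_{i∈ℕ} be a filtration of S (i.e. S_0 = ∅, S_i ⊆ S_{i+1} for all i, and S = ⋃_{i∈ℕ} S_i) such that each S_i is finite. Then the topology on TO(S) induced by the metric d_𝐒 coincides with the topology 𝒰 generated by the subbasis {𝔘_{(a,b)} : (a,b) ∈ S×S}. In particular, the metric topology is independent of the chosen filtration of S. -/

import Mathlib

/-- A total ordering on `S`: an antisymmetric, transitive and total binary relation. -/
def IsTotalOrdering {S : Type*} (r : S → S → Prop) : Prop :=
  (∀ a b, r a b → r b a → a = b) ∧ (∀ a b c, r a b → r b c → r a c) ∧ (∀ a b, r a b ∨ r b a)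

/-- `TO S` is the set of all total orderings on `S`. -/
def TO (S : Type*) : Type _ := {r : S → S → Prop // IsTotalOrdering r}

/-- The underlying relation of a total ordering. -/
def TO.rel {S : Type*} (r : TO S) : S → S → Prop := Subtype.val r

/-- The subbasic open set `𝔘_{(a,b)} = {≼ ∈ TO(S) : a ≼ b}`. -/
def USet {S : Type*} (a b : S) : Set (TO S) := {r | r.rel a b}

/-- The topology `𝒰` on `TO S`: the coarsest topology for which all `𝔘_{(a,b)}` are open. -/
instance TOTop (S : Type*) : TopologicalSpace (TO S) :=
  TopologicalSpace.generateFrom {U | ∃ a b, U = USet a b}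


/-- The distance attached to a filtration `Sf` of `S`:
`d(≼', ≼'') = 2^{-r}` where `r = sup{i : ≼' and ≼'' restrict to the same relation on Sf i}`,
with the convention `2^{-∞} = 0`, i.e. the distance is `0` when the two orderings are equal. -/
noncomputable def dFil {S : Type*} (Sf : ℕ → Set S) (r r' : TO S) : ℝ :=
  letI := Classical.propDecidable (r = r')
  if r = r' then 0
  else (2 : ℝ)⁻¹ ^ sSup {i : ℕ | ∀ a ∈ Sf i, ∀ b ∈ Sf i, (r.rel a b ↔ r'.rel a b)}

namespace MetricTopologyAux

variable {S : Type*}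

lemma rel_refl (r : TO S) (a : S) : r.rel a a := (r.2.2.2 a a).elim id id

/-- The set of agreement levels of two total orders. -/
def Agr (Sf : ℕ → Set S) (r r' : TO S) : Set ℕ :=
  {i : ℕ | ∀ a ∈ Sf i, ∀ b ∈ Sf i, (r.rel a b ↔ r'.rel a b)}

lemma dFil_self (Sf : ℕ → Set S) (r : TO S) : dFil Sf r r = 0 := by
  simp [dFil]

lemma dFil_ne (Sf : ℕ → Set S) {r r' : TO S} (h : r ≠ r') :
    dFil Sf r r' = (2 : ℝ)⁻¹ ^ sSup (Agr Sf r r') := by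
  simp [dFil, if_neg h, Agr]

variable {Sf : ℕ → Set S}

lemma agr_mem_of_le (hmono : ∀ i, Sf i ⊆ Sf (i + 1)) {r r' : TO S} {i j : ℕ}
    (hij : i ≤ j) (hj : j ∈ Agr Sf r r') : i ∈ Agr Sf r r' := by
  have hsub : Sf i ⊆ Sf j := monotone_nat_of_le_succ hmono hij
  intro a ha b hb
  exact hj a (hsub ha) b (hsub hb)

lemma agr_zero (h0 : Sf 0 = ∅) (r r' : TO S) : 0 ∈ Agr Sf r r' := by
  intro a ha
  rw [h0] at ha
  exact absurd ha (Set.notMem_empty a)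

lemma agr_bddAbove (hmono : ∀ i, Sf i ⊆ Sf (i + 1)) (hunion : (⋃ i, Sf i) = Set.univ)
    {r r' : TO S} (h : r ≠ r') : BddAbove (Agr Sf r r') := by
  have : ∃ a b, ¬ (r.rel a b ↔ r'.rel a b) := by
    by_contra hc
    push_neg at hc
    apply h
    apply Subtype.ext
    funext a b
    exact propext (hc a b)
  obtain ⟨a, b, hab⟩ := this
  have ha : a ∈ ⋃ i, Sf i := by rw [hunion]; trivial
  have hb : b ∈ ⋃ i, Sf i := by rw [hunion]; trivial
  obtain ⟨_, ⟨i, rfl⟩, hai⟩ := ha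
  obtain ⟨_, ⟨j, rfl⟩, hbj⟩ := hb
  refine ⟨max i j, fun k hk => ?_⟩
  by_contra hlt
  push_neg at hlt
  have hsub : Sf (max i j) ⊆ Sf k := monotone_nat_of_le_succ hmono hlt.le
  exact hab (hk a (hsub (monotone_nat_of_le_succ hmono (le_max_left i j) hai))
    b (hsub (monotone_nat_of_le_succ hmono (le_max_right i j) hbj)))

lemma sSup_agr_mem (h0 : Sf 0 = ∅) (hmono : ∀ i, Sf i ⊆ Sf (i + 1))
    (hunion : (⋃ i, Sf i) = Set.univ) {r r' : TO S} (h : r ≠ r') :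
    sSup (Agr Sf r r') ∈ Agr Sf r r' :=
  Nat.sSup_mem ⟨0, agr_zero h0 r r'⟩ (agr_bddAbove hmono hunion h)

lemma dFil_nonneg (Sf : ℕ → Set S) (r r' : TO S) : 0 ≤ dFil Sf r r' := by
  by_cases h : r = r'
  · subst h; rw [dFil_self]
  · rw [dFil_ne Sf h]; positivity

/-- If `d(r,r') ≤ 2⁻¹ ^ i` fails to be big: if `d < 2⁻¹^i` then `i` is an agreement level. -/
lemma agr_of_dFil_lt (h0 : Sf 0 = ∅) (hmono : ∀ i, Sf i ⊆ Sf (i + 1))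
    (hunion : (⋃ i, Sf i) = Set.univ) {r r' : TO S} {i : ℕ}
    (h : dFil Sf r r' < (2 : ℝ)⁻¹ ^ i) : i ∈ Agr Sf r r' := by
  by_cases he : r = r'
  · subst he; intro a _ b _; rfl
  · rw [dFil_ne Sf he] at h
    have hi : i < sSup (Agr Sf r r') := by
      have h2 : (0:ℝ) < 2⁻¹ := by norm_num
      have h1 : (2:ℝ)⁻¹ < 1 := by norm_num
      exact (pow_lt_pow_iff_right_of_lt_one₀ h2 h1).1 h
    exact agr_mem_of_le hmono hi.le (sSup_agr_mem h0 hmono hunion he)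

lemma dFil_le_of_agr (hmono : ∀ i, Sf i ⊆ Sf (i + 1)) (hunion : (⋃ i, Sf i) = Set.univ)
    {r r' : TO S} {i : ℕ} (h : i ∈ Agr Sf r r') :
    dFil Sf r r' ≤ (2 : ℝ)⁻¹ ^ i := by
  by_cases he : r = r'
  · subst he; rw [dFil_self]; positivity
  · rw [dFil_ne Sf he]
    have hle : i ≤ sSup (Agr Sf r r') := le_csSup (agr_bddAbove hmono hunion he) h
    exact pow_le_pow_of_le_one (by norm_num) (by norm_num) hle

/-- Ultrametric inequality. -/
lemma dFil_le_max (h0 : Sf 0 = ∅) (hmono : ∀ i, Sf i ⊆ Sf (i + 1))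
    (hunion : (⋃ i, Sf i) = Set.univ) (r r'' r' : TO S) :
    dFil Sf r r' ≤ max (dFil Sf r r'') (dFil Sf r'' r') := by
  by_cases h1 : r = r'
  · subst h1; rw [dFil_self]
    exact le_max_of_le_left (dFil_nonneg Sf r r'')
  by_cases h2 : r = r''
  · subst h2; exact le_max_right _ _
  by_cases h3 : r'' = r'
  · subst h3; exact le_max_left _ _
  set N1 := sSup (Agr Sf r r'') with hN1
  set N2 := sSup (Agr Sf r'' r') with hN2
  have hm1 : min N1 N2 ∈ Agr Sf r r'' :=
    agr_mem_of_le hmono (min_le_left _ _) (sSup_agr_mem h0 hmono hunion h2)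
  have hm2 : min N1 N2 ∈ Agr Sf r'' r' :=
    agr_mem_of_le hmono (min_le_right _ _) (sSup_agr_mem h0 hmono hunion h3)
  have hm : min N1 N2 ∈ Agr Sf r r' := fun a ha b hb =>
    (hm1 a ha b hb).trans (hm2 a ha b hb)
  have := dFil_le_of_agr hmono hunion hm
  refine this.trans ?_
  rw [dFil_ne Sf h2, dFil_ne Sf h3, ← hN1, ← hN2]
  rcases min_cases N1 N2 with ⟨hmin, _⟩ | ⟨hmin, _⟩
  · rw [hmin]; exact le_max_left _ _
  · rw [hmin]; exact le_max_right _ _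

/-- The set of orders agreeing with `r` on `Sf i` is open in the `𝒰`-topology. -/
lemma isOpen_agrSet (hfin : ∀ i, (Sf i).Finite) (r : TO S) (i : ℕ) :
    IsOpen {r' : TO S | i ∈ Agr Sf r r'} := by
  have : {r' : TO S | i ∈ Agr Sf r r'} =
      ⋂ a ∈ Sf i, ⋂ b ∈ Sf i, {r' : TO S | r.rel a b ↔ r'.rel a b} := by
    ext r'; simp [Agr]
  rw [this]
  refine (hfin i).isOpen_biInter fun a _ => (hfin i).isOpen_biInter fun b _ => ?_
  by_cases hab : r.rel a b
  · have : {r' : TO S | r.rel a b ↔ r'.rel a b} = USet a b := by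
      ext r'; simp only [Set.mem_setOf_eq, USet]
      exact ⟨fun h => h.1 hab, fun h => ⟨fun _ => h, fun _ => hab⟩⟩
    rw [this]
    exact TopologicalSpace.isOpen_generateFrom_of_mem ⟨a, b, rfl⟩
  · have hne : a ≠ b := fun h => hab (h ▸ rel_refl r a)
    have : {r' : TO S | r.rel a b ↔ r'.rel a b} = USet b a := by
      ext r'; simp only [Set.mem_setOf_eq, USet]
      constructor
      · intro h
        rcases r'.2.2.2 a b with hab' | hba'
        · exact absurd (h.2 hab') hab
        · exact hba'
      · intro h
        constructor
        · intro h'; exact absurd h' hab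
        · intro h'; exact absurd (r'.2.1 a b h' h) hne
    rw [this]
    exact TopologicalSpace.isOpen_generateFrom_of_mem ⟨b, a, rfl⟩

lemma generateOpen_of_forall {α : Type*} {G : Set (Set α)} {U : Set α}
    (h : ∀ x ∈ U, ∃ V ∈ G, x ∈ V ∧ V ⊆ U) :
    TopologicalSpace.GenerateOpen G U := by
  have hU : U = ⋃₀ {V | V ∈ G ∧ V ⊆ U} := by
    ext x
    constructor
    · intro hx
      obtain ⟨V, hVG, hxV, hVU⟩ := h x hx
      exact ⟨V, ⟨hVG, hVU⟩, hxV⟩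
    · rintro ⟨V, ⟨_, hVU⟩, hxV⟩
      exact hVU hxV
  rw [hU]
  exact .sUnion _ fun V hV => .basic V hV.1

end MetricTopologyAux

open MetricTopologyAux in
/-- if `𝐒 = (S_i)` is a filtration of `S` (`S_0 = ∅`, `S_i ⊆ S_{i+1}`,
`⋃ S_i = S`) with each `S_i` finite, then the topology on `TO(S)` induced by the metric
`d_𝐒` (generated by the open balls of `d_𝐒`) coincides with the topology `𝒰` generated by
the sets `𝔘_{(a,b)}`; in particular the metric topology does not depend on the chosen
filtration. -/
theorem metricTopology_eq_U {S : Type*} (Sf : ℕ → Set S)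
    (h0 : Sf 0 = ∅) (hmono : ∀ i, Sf i ⊆ Sf (i + 1)) (hunion : (⋃ i, Sf i) = Set.univ)
    (hfin : ∀ i, (Sf i).Finite) :
    TopologicalSpace.generateFrom
        {B : Set (TO S) | ∃ (r : TO S) (ε : ℝ), 0 < ε ∧ B = {r' | dFil Sf r r' < ε}} =
      TOTop S := by
  apply le_antisymm
  · -- balls-topology is finer: every `USet` is open for the ball topology
    show TopologicalSpace.generateFrom _ ≤
      TopologicalSpace.generateFrom {U | ∃ a b, U = USet a b}
    rw [TopologicalSpace.le_generateFrom_iff_subset_isOpen]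
    rintro U ⟨a, b, rfl⟩
    show TopologicalSpace.GenerateOpen _ (USet a b)
    apply generateOpen_of_forall
    intro r hr
    -- find a level containing both a and b
    have ha : a ∈ ⋃ i, Sf i := by rw [hunion]; trivial
    have hb : b ∈ ⋃ i, Sf i := by rw [hunion]; trivial
    obtain ⟨_, ⟨i, rfl⟩, hai⟩ := ha
    obtain ⟨_, ⟨j, rfl⟩, hbj⟩ := hb
    set k := max i j
    have hak : a ∈ Sf k := monotone_nat_of_le_succ hmono (le_max_left i j) hai
    have hbk : b ∈ Sf k := monotone_nat_of_le_succ hmono (le_max_right i j) hbj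
    refine ⟨{r' | dFil Sf r r' < (2 : ℝ)⁻¹ ^ k}, ⟨r, (2 : ℝ)⁻¹ ^ k, by positivity, rfl⟩,
      ?_, ?_⟩
    · show dFil Sf r r < _
      rw [dFil_self]
      positivity
    · intro r' hr'
      have hagr : k ∈ Agr Sf r r' := agr_of_dFil_lt h0 hmono hunion hr'
      exact (hagr a hak b hbk).1 hr
  · -- `𝒰` is finer: every ball is `𝒰`-open
    rw [TopologicalSpace.le_generateFrom_iff_subset_isOpen]
    rintro B ⟨r, ε, hε, rfl⟩
    show IsOpen {r' : TO S | dFil Sf r r' < ε}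
    rw [isOpen_iff_forall_mem_open]
    intro r'' hr''
    obtain ⟨j, hj⟩ : ∃ j : ℕ, (2 : ℝ)⁻¹ ^ j < ε := exists_pow_lt_of_lt_one hε (by norm_num)
    refine ⟨{r' : TO S | j ∈ Agr Sf r'' r'}, ?_, isOpen_agrSet hfin r'' j, ?_⟩
    · intro r' hr'
      have hd2 : dFil Sf r'' r' ≤ (2 : ℝ)⁻¹ ^ j := dFil_le_of_agr hmono hunion hr'
      have := dFil_le_max h0 hmono hunion r r'' r'
      have hlt : max (dFil Sf r r'') (dFil Sf r'' r') < ε :=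
        max_lt hr'' (lt_of_le_of_lt hd2 hj)
      exact lt_of_le_of_lt this hlt
    · intro a _ b _; rfl
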